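/- Let γ(s,t) be an arclength-parametrized inextensible flow of pseudo null curves in E⁴₁ with pseudo null Frenet frame {T, N, B₁, B₂}, curvatures k₁ = 1, k₂, k₃, and flow ∂γ/∂t = α₁T + α₂N + α₃B₁ + α₄B₂ (so ∂α₁/∂s = α₄). Then ∂²α₄/∂s² − ∂(α₃k₂)/∂s − (∂α₃/∂s)k₂ − α₂k₂² + α₄k₂k₃ = 0. -/

import Mathlib

/-!
Formalization of inextensible flows of partially null / pseudo null curves in
Minkowski space-time `E⁴₁` (ℝ⁴ with signature (-,+,+,+)).
-/

noncomputable section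

/-- The Minkowski bilinear form on `ℝ⁴` with signature `(-,+,+,+)`. -/
def mink (v w : Fin 4 → ℝ) : ℝ :=
  -(v 0 * w 0) + v 1 * w 1 + v 2 * w 2 + v 3 * w 3

/-- The Minkowski norm `‖v‖ = √|⟨v,v⟩|`. -/
def mnorm (v : Fin 4 → ℝ) : ℝ := Real.sqrt |mink v v|

variable {E : Type*} [NormedAddCommGroup E] [NormedSpace ℝ E]

lemma hasDerivAt_slice1 (f : ℝ × ℝ → E) (hf : Differentiable ℝ f) (a b : ℝ) :
    HasDerivAt (fun x => f (x, b)) (fderiv ℝ f (a, b) (1, 0)) a := by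
  have hline : HasDerivAt (fun x : ℝ => ((x, b) : ℝ × ℝ)) ((1 : ℝ), (0 : ℝ)) a :=
    (hasDerivAt_id a).prodMk (hasDerivAt_const a b)
  simpa [Function.comp_def] using (hf (a, b)).hasFDerivAt.comp_hasDerivAt a hline

lemma hasDerivAt_slice2 (f : ℝ × ℝ → E) (hf : Differentiable ℝ f) (a b : ℝ) :
    HasDerivAt (fun x => f (a, x)) (fderiv ℝ f (a, b) (0, 1)) b := by
  have hline : HasDerivAt (fun x : ℝ => ((a, x) : ℝ × ℝ)) ((0 : ℝ), (1 : ℝ)) b :=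
    (hasDerivAt_const b a).prodMk (hasDerivAt_id b)
  simpa [Function.comp_def] using (hf (a, b)).hasFDerivAt.comp_hasDerivAt b hline

lemma applyv_smooth (f : ℝ × ℝ → E) (hf : ContDiff ℝ (⊤ : ℕ∞) f) (v : ℝ × ℝ) :
    ContDiff ℝ (⊤ : ℕ∞) (fun p => fderiv ℝ f p v) :=
  (ContinuousLinearMap.apply ℝ E v).contDiff.comp (hf.fderiv_right (m := (⊤:ℕ∞)) (by exact_mod_cast le_rfl))

lemma fderiv_swap (f : ℝ × ℝ → E) (hf : ContDiff ℝ (⊤ : ℕ∞) f) (p v w : ℝ × ℝ) :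
    fderiv ℝ (fun q => fderiv ℝ f q v) p w = fderiv ℝ (fun q => fderiv ℝ f q w) p v := by
  have hsymm : IsSymmSndFDerivAt ℝ f p :=
    hf.contDiffAt.isSymmSndFDerivAt (by rw [minSmoothness_of_isRCLikeNormedField]; exact WithTop.coe_le_coe.2 (le_top : (2:ℕ∞) ≤ ⊤))
  have hd : DifferentiableAt ℝ (fderiv ℝ f) p :=
    ((hf.fderiv_right (m := (⊤:ℕ∞)) (by exact_mod_cast le_rfl)).differentiable (by decide)) p
  have h1 : ∀ u : ℝ × ℝ, fderiv ℝ (fun q => fderiv ℝ f q u) p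
      = (ContinuousLinearMap.apply ℝ E u).comp (fderiv ℝ (fderiv ℝ f) p) := by
    intro u
    exact ((ContinuousLinearMap.apply ℝ E u).hasFDerivAt.comp p hd.hasFDerivAt).fderiv
  rw [h1 v, h1 w]
  simpa using hsymm.eq w v

lemma slice1_hasDeriv (f : ℝ → ℝ → E) (hf : ContDiff ℝ (⊤ : ℕ∞) (fun p : ℝ × ℝ => f p.1 p.2))
    (s t : ℝ) : HasDerivAt (fun x => f x t) (deriv (fun x => f x t) s) s := by
  have h := hasDerivAt_slice1 (fun p : ℝ × ℝ => f p.1 p.2) (hf.differentiable (by decide)) s t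
  exact h.deriv ▸ h

lemma slice2_hasDeriv (f : ℝ → ℝ → E) (hf : ContDiff ℝ (⊤ : ℕ∞) (fun p : ℝ × ℝ => f p.1 p.2))
    (s t : ℝ) : HasDerivAt (fun x => f s x) (deriv (fun x => f s x) t) t := by
  have h := hasDerivAt_slice2 (fun p : ℝ × ℝ => f p.1 p.2) (hf.differentiable (by decide)) s t
  exact h.deriv ▸ h

/-- The first-slot partial derivative is differentiable in the first slot. -/
lemma Dslice1_hasDeriv (f : ℝ → ℝ → E) (hf : ContDiff ℝ (⊤ : ℕ∞) (fun p : ℝ × ℝ => f p.1 p.2))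
    (s t : ℝ) : HasDerivAt (fun x => deriv (fun y => f y t) x)
      (deriv (fun x => deriv (fun y => f y t) x) s) s := by
  set F : ℝ × ℝ → E := fun p => f p.1 p.2 with hF
  have hFd : Differentiable ℝ F := hf.differentiable (by decide)
  have hfun : (fun x => deriv (fun y => f y t) x) = fun x => fderiv ℝ F (x, t) (1, 0) :=
    funext fun x => (hasDerivAt_slice1 F hFd x t).deriv.symm ▸ rfl
  rw [hfun]
  have hB : ContDiff ℝ (⊤ : ℕ∞) (fun p => fderiv ℝ F p (1, 0)) := applyv_smooth F hf _
  have h := hasDerivAt_slice1 (fun p => fderiv ℝ F p (1, 0)) (hB.differentiable (by decide)) s t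
  exact h.deriv ▸ h

/-- Schwarz: the second-slot partial derivative, as a function of the first slot, has
derivative the mixed partial taken in the other order. -/
lemma mixed_hasDeriv (f : ℝ → ℝ → E) (hf : ContDiff ℝ (⊤ : ℕ∞) (fun p : ℝ × ℝ => f p.1 p.2))
    (s t : ℝ) : HasDerivAt (fun y => deriv (fun x => f y x) t)
      (deriv (fun x => deriv (fun y => f y x) s) t) s := by
  set F : ℝ × ℝ → E := fun p => f p.1 p.2 with hF
  have hFd : Differentiable ℝ F := hf.differentiable (by decide)
  have hA : ContDiff ℝ (⊤ : ℕ∞) (fun p => fderiv ℝ F p (0, 1)) := applyv_smooth F hf _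
  have hB : ContDiff ℝ (⊤ : ℕ∞) (fun p => fderiv ℝ F p (1, 0)) := applyv_smooth F hf _
  have key : (fun y => deriv (fun x => f y x) t) = fun y => fderiv ℝ F (y, t) (0, 1) :=
    funext fun y => (hasDerivAt_slice2 F hFd y t).deriv
  rw [key]
  have h1 := hasDerivAt_slice1 (fun p => fderiv ℝ F p (0, 1)) (hA.differentiable (by decide)) s t
  convert h1 using 1
  rw [fderiv_swap F hf (s, t) (0, 1) (1, 0)]
  have key2 : (fun x => deriv (fun y => f y x) s) = fun x => fderiv ℝ F (s, x) (1, 0) :=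
    funext fun x => (hasDerivAt_slice1 F hFd s x).deriv
  rw [key2, (hasDerivAt_slice2 (fun p => fderiv ℝ F p (1, 0)) (hB.differentiable (by decide)) s t).deriv]

lemma mink_comm (u v : Fin 4 → ℝ) : mink u v = mink v u := by simp [mink]; ring

lemma mink_add_left (u v w : Fin 4 → ℝ) : mink (u + v) w = mink u w + mink v w := by
  simp [mink]; ring

lemma mink_sub_left (u v w : Fin 4 → ℝ) : mink (u - v) w = mink u w - mink v w := by
  simp [mink]; ring

lemma mink_smul_left (a : ℝ) (u w : Fin 4 → ℝ) : mink (a • u) w = a * mink u w := by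
  simp [mink]; ring

lemma mink_neg_left (u w : Fin 4 → ℝ) : mink (-u) w = -mink u w := by
  simp [mink]; ring

lemma HasDerivAt.mink2 {u v : ℝ → Fin 4 → ℝ} {u' v' : Fin 4 → ℝ} {x : ℝ}
    (hu : HasDerivAt u u' x) (hv : HasDerivAt v v' x) :
    HasDerivAt (fun y => mink (u y) (v y)) (mink u' (v x) + mink (u x) v') x := by
  have hui : ∀ i, HasDerivAt (fun y => u y i) (u' i) x := fun i =>
    (ContinuousLinearMap.proj (R := ℝ) (φ := fun _ : Fin 4 => ℝ) i).hasFDerivAt.comp_hasDerivAt x hu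
  have hvi : ∀ i, HasDerivAt (fun y => v y i) (v' i) x := fun i =>
    (ContinuousLinearMap.proj (R := ℝ) (φ := fun _ : Fin 4 => ℝ) i).hasFDerivAt.comp_hasDerivAt x hv
  have h := ((((hui 0).mul (hvi 0)).neg.add ((hui 1).mul (hvi 1))).add
      ((hui 2).mul (hvi 2))).add ((hui 3).mul (hvi 3))
  refine h.congr_deriv ?_
  simp [mink]; ring


theorem pde_B2_component_pseudo_null
    (γ T N B₁ B₂ : ℝ → ℝ → (Fin 4 → ℝ))
    (k₁ k₂ k₃ α₁ α₂ α₃ α₄ : ℝ → ℝ → ℝ)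
    (hγsmooth : ContDiff ℝ (⊤ : ℕ∞) (fun p : ℝ × ℝ => γ p.1 p.2))
    (hTsmooth : ContDiff ℝ (⊤ : ℕ∞) (fun p : ℝ × ℝ => T p.1 p.2))
    (hNsmooth : ContDiff ℝ (⊤ : ℕ∞) (fun p : ℝ × ℝ => N p.1 p.2))
    (hB₁smooth : ContDiff ℝ (⊤ : ℕ∞) (fun p : ℝ × ℝ => B₁ p.1 p.2))
    (hB₂smooth : ContDiff ℝ (⊤ : ℕ∞) (fun p : ℝ × ℝ => B₂ p.1 p.2))
    (hk₂smooth : ContDiff ℝ (⊤ : ℕ∞) (fun p : ℝ × ℝ => k₂ p.1 p.2))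
    (hk₃smooth : ContDiff ℝ (⊤ : ℕ∞) (fun p : ℝ × ℝ => k₃ p.1 p.2))
    (hα₁smooth : ContDiff ℝ (⊤ : ℕ∞) (fun p : ℝ × ℝ => α₁ p.1 p.2))
    (hα₂smooth : ContDiff ℝ (⊤ : ℕ∞) (fun p : ℝ × ℝ => α₂ p.1 p.2))
    (hα₃smooth : ContDiff ℝ (⊤ : ℕ∞) (fun p : ℝ × ℝ => α₃ p.1 p.2))
    (hα₄smooth : ContDiff ℝ (⊤ : ℕ∞) (fun p : ℝ × ℝ => α₄ p.1 p.2))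
    (hTT : ∀ s t : ℝ, mink (T s t) (T s t) = 1)
    (hB₁B₁ : ∀ s t : ℝ, mink (B₁ s t) (B₁ s t) = 1)
    (hNN : ∀ s t : ℝ, mink (N s t) (N s t) = 0)
    (hB₂B₂ : ∀ s t : ℝ, mink (B₂ s t) (B₂ s t) = 0)
    (hNB₂ : ∀ s t : ℝ, mink (N s t) (B₂ s t) = 1)
    (hTN : ∀ s t : ℝ, mink (T s t) (N s t) = 0)
    (hTB₁ : ∀ s t : ℝ, mink (T s t) (B₁ s t) = 0)
    (hTB₂ : ∀ s t : ℝ, mink (T s t) (B₂ s t) = 0)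
    (hNB₁ : ∀ s t : ℝ, mink (N s t) (B₁ s t) = 0)
    (hB₁B₂ : ∀ s t : ℝ, mink (B₁ s t) (B₂ s t) = 0)
    -- arclength parametrization and pseudo null Frenet equations (k₁ = 1)
    (hk₁ : ∀ s t : ℝ, k₁ s t = 1)
    (hT : ∀ s t : ℝ, T s t = deriv (fun x => γ x t) s)
    (hunit : ∀ s t : ℝ, mnorm (deriv (fun x => γ x t) s) = 1)
    (hfr₁ : ∀ s t : ℝ, deriv (fun x => T x t) s = k₁ s t • N s t)
    (hfr₂ : ∀ s t : ℝ, deriv (fun x => N x t) s = k₂ s t • B₁ s t)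
    (hfr₃ : ∀ s t : ℝ, deriv (fun x => B₁ x t) s = k₃ s t • N s t - k₂ s t • B₂ s t)
    (hfr₄ : ∀ s t : ℝ, deriv (fun x => B₂ x t) s = -(k₁ s t) • T s t - k₃ s t • B₁ s t)
    (hflow : ∀ s t : ℝ, deriv (fun x => γ s x) t =
      α₁ s t • T s t + α₂ s t • N s t + α₃ s t • B₁ s t + α₄ s t • B₂ s t)
    -- inextensibility: ∂α₁/∂s = α₄
    (hinext : ∀ s t : ℝ, deriv (fun x => α₁ x t) s = α₄ s t) :
    ∀ s t : ℝ,
      deriv (fun x => deriv (fun y => α₄ y t) x) s - deriv (fun x => α₃ x t * k₂ x t) s -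
      deriv (fun x => α₃ x t) s * k₂ s t - α₂ s t * (k₂ s t) ^ 2 +
      α₄ s t * k₂ s t * k₃ s t = 0 := by
  intro s t
  -- commuted inner-product facts
  have hNT : ∀ a b : ℝ, mink (N a b) (T a b) = 0 := fun a b => (mink_comm _ _).trans (hTN a b)
  have hB₁T : ∀ a b : ℝ, mink (B₁ a b) (T a b) = 0 := fun a b => (mink_comm _ _).trans (hTB₁ a b)
  have hB₂T : ∀ a b : ℝ, mink (B₂ a b) (T a b) = 0 := fun a b => (mink_comm _ _).trans (hTB₂ a b)
  have hB₁N : ∀ a b : ℝ, mink (B₁ a b) (N a b) = 0 := fun a b => (mink_comm _ _).trans (hNB₁ a b)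
  have hB₂N : ∀ a b : ℝ, mink (B₂ a b) (N a b) = 1 := fun a b => (mink_comm _ _).trans (hNB₂ a b)
  have hB₂B₁ : ∀ a b : ℝ, mink (B₂ a b) (B₁ a b) = 0 := fun a b => (mink_comm _ _).trans (hB₁B₂ a b)
  -- first-slot derivatives (Frenet)
  have hT1 : ∀ y, HasDerivAt (fun x => T x t) (N y t) y := fun y => by
    have h := slice1_hasDeriv T hTsmooth y t
    rwa [hfr₁, hk₁, one_smul] at h
  have hN1 : ∀ y, HasDerivAt (fun x => N x t) (k₂ y t • B₁ y t) y := fun y => by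
    have h := slice1_hasDeriv N hNsmooth y t; rwa [hfr₂] at h
  have hB₁1 : ∀ y, HasDerivAt (fun x => B₁ x t) (k₃ y t • N y t - k₂ y t • B₂ y t) y := fun y => by
    have h := slice1_hasDeriv B₁ hB₁smooth y t; rwa [hfr₃] at h
  have hB₂1 : ∀ y, HasDerivAt (fun x => B₂ x t) (-T y t - k₃ y t • B₁ y t) y := fun y => by
    have h := slice1_hasDeriv B₂ hB₂smooth y t
    rw [hfr₄, hk₁] at h
    simpa using h
  have hα₁1 : ∀ y, HasDerivAt (fun x => α₁ x t) (α₄ y t) y := fun y => by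
    have h := slice1_hasDeriv α₁ hα₁smooth y t; rwa [hinext] at h
  have hα₂1 := fun y => slice1_hasDeriv α₂ hα₂smooth y t
  have hα₃1 := fun y => slice1_hasDeriv α₃ hα₃smooth y t
  have hα₄1 := fun y => slice1_hasDeriv α₄ hα₄smooth y t
  have hk₂1 := fun y => slice1_hasDeriv k₂ hk₂smooth y t
  -- second-slot derivatives (symbolic)
  have hT2 := fun y => slice2_hasDeriv T hTsmooth y t
  have hN2 := fun y => slice2_hasDeriv N hNsmooth y t
  have hB₁2 := fun y => slice2_hasDeriv B₁ hB₁smooth y t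
  have hk₂2 := fun y => slice2_hasDeriv k₂ hk₂smooth y t
  -- Step A : value of ∂T/∂t via Schwarz on γ and the flow equation
  have hDtT : ∀ y, deriv (fun x => T y x) t =
      (((α₁ y t • N y t + α₄ y t • T y t) +
        (α₂ y t • (k₂ y t • B₁ y t) + deriv (fun x => α₂ x t) y • N y t)) +
        (α₃ y t • (k₃ y t • N y t - k₂ y t • B₂ y t) + deriv (fun x => α₃ x t) y • B₁ y t)) +
        (α₄ y t • (-T y t - k₃ y t • B₁ y t) + deriv (fun x => α₄ x t) y • B₂ y t) := by
    intro y
    have e1 : (fun x => T y x) = fun x => deriv (fun z => γ z x) y := funext fun x => hT y x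
    have hmix := (mixed_hasDeriv γ hγsmooth y t).deriv
    have e2 : (fun z => deriv (fun x => γ z x) t) =
        fun z => α₁ z t • T z t + α₂ z t • N z t + α₃ z t • B₁ z t + α₄ z t • B₂ z t :=
      funext fun z => hflow z t
    have hsum := (((((hα₁1 y).smul (hT1 y)).add ((hα₂1 y).smul (hN1 y))).add
      ((hα₃1 y).smul (hB₁1 y))).add ((hα₄1 y).smul (hB₂1 y))).deriv
    rw [e1, ← hmix, e2]
    exact hsum
  -- Step B : ⟨T, ∂N/∂t⟩ = -(∂α₄/∂s - α₃ k₂)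
  have stepB : ∀ y, mink (T y t) (deriv (fun x => N y x) t)
      = -(deriv (fun x => α₄ x t) y - α₃ y t * k₂ y t) := by
    intro y
    have hB := (hT2 y).mink2 (hN2 y)
    have hzero : (fun x => mink (T y x) (N y x)) = fun _ => (0 : ℝ) := funext fun x => hTN y x
    rw [hzero] at hB
    have h0 := hB.unique (hasDerivAt_const t 0)
    rw [hDtT y] at h0
    simp only [mink_add_left, mink_sub_left, mink_smul_left, mink_neg_left,
      hTN, hNN, hB₁N, hB₂N, hNT, hB₁T, hB₂T, hTT, hB₁B₁, hTB₁, hNB₁] at h0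
    linarith [h0]
  -- Step C : ⟨T, ∂B₁/∂t⟩ = -(α₂ k₂ + ∂α₃/∂s - α₄ k₃)
  have stepC : mink (T s t) (deriv (fun x => B₁ s x) t)
      = -(α₂ s t * k₂ s t + deriv (fun x => α₃ x t) s - α₄ s t * k₃ s t) := by
    have hB := (hT2 s).mink2 (hB₁2 s)
    have hzero : (fun x => mink (T s x) (B₁ s x)) = fun _ => (0 : ℝ) := funext fun x => hTB₁ s x
    rw [hzero] at hB
    have h0 := hB.unique (hasDerivAt_const t 0)
    rw [hDtT s] at h0
    simp only [mink_add_left, mink_sub_left, mink_smul_left, mink_neg_left,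
      hTB₁, hNB₁, hB₁B₁, hB₂B₁, hTT, hNT, hB₁T, hB₂T] at h0
    linarith [h0]
  -- Step D : ⟨∂N/∂t, N⟩ = 0
  have stepD : mink (deriv (fun x => N s x) t) (N s t) = 0 := by
    have hB := (hN2 s).mink2 (hN2 s)
    have hzero : (fun x => mink (N s x) (N s x)) = fun _ => (0 : ℝ) := funext fun x => hNN s x
    rw [hzero] at hB
    have h0 := hB.unique (hasDerivAt_const t 0)
    have hc : mink (N s t) (deriv (fun x => N s x) t)
        = mink (deriv (fun x => N s x) t) (N s t) := mink_comm _ _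
    rw [hc] at h0
    linarith [h0]
  -- Step F : differentiate y ↦ ⟨∂N/∂t, T⟩ and use Schwarz on N
  have hM := mixed_hasDeriv N hNsmooth s t
  have e3 : (fun x => deriv (fun y => N y x) s) = fun x => k₂ s x • B₁ s x :=
    funext fun x => hfr₂ s x
  have hsm := ((hk₂2 s).smul (hB₁2 s)).deriv
  have hMval : deriv (fun x => deriv (fun y => N y x) s) t
      = k₂ s t • deriv (fun x => B₁ s x) t + deriv (fun x => k₂ s x) t • B₁ s t := by
    rw [e3]; exact hsm
  rw [hMval] at hM
  have hgd := hM.mink2 (hT1 s)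
  have hfun : (fun y => mink (deriv (fun x => N y x) t) (T y t))
      = fun y => -(deriv (fun x => α₄ x t) y - α₃ y t * k₂ y t) :=
    funext fun y => ((mink_comm _ _).trans (stepB y))
  rw [hfun] at hgd
  have hD4 := Dslice1_hasDeriv α₄ hα₄smooth s t
  have hrhs := (hD4.sub ((hα₃1 s).mul (hk₂1 s))).neg
  have huniq := hgd.unique hrhs
  have stepC' : mink (deriv (fun x => B₁ s x) t) (T s t)
      = -(α₂ s t * k₂ s t + deriv (fun x => α₃ x t) s - α₄ s t * k₃ s t) :=
    (mink_comm _ _).trans stepC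
  simp only [mink_add_left, mink_smul_left, hB₁T, stepC', stepD] at huniq
  have hmul := ((hα₃1 s).mul (hk₂1 s)).deriv
  rw [show (fun x => α₃ x t * k₂ x t) = (fun x => α₃ x t) * fun x => k₂ x t from rfl, hmul]
  nlinarith [huniq]
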